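/- Let p be a prime, A a commutative ring of characteristic p which is perfect (Frobenius bijective), and B an étale A-algebra, i.e. B is formally étale and of finite presentation over A. Then B is perfect: the Frobenius endomorphism x ↦ x^p of B is bijective. -/

import Mathlib

universe u

open Algebra

section Twist

variable {R S B : Type u} [CommRing R] [CommRing S] [CommRing B] [Algebra S B]
  (σ : R ≃+* S)

theorem aux_formallyEtale_twist [Algebra.FormallyEtale S B] :
    @Algebra.FormallyEtale R B _ _ ((algebraMap S B).comp σ.toRingHom).toAlgebra := by
  letI i1 : Algebra R S := σ.toRingHom.toAlgebra
  letI i2 : Algebra R B := ((algebraMap S B).comp σ.toRingHom).toAlgebra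
  haveI : IsScalarTower R S B := IsScalarTower.of_algebraMap_eq (fun x => rfl)
  haveI hsm : Algebra.FormallySmooth R R := inferInstance
  haveI : Algebra.FormallyEtale R R := Algebra.FormallyEtale.of_formallyUnramified_and_formallySmooth
  haveI : Algebra.FormallyEtale R S := by
    refine Algebra.FormallyEtale.of_equiv (A := R)
      { σ with commutes' := fun r => rfl }
  exact Algebra.FormallyEtale.comp R S B

theorem aux_finitePresentation_twist [Algebra.FinitePresentation S B] :
    @Algebra.FinitePresentation R B _ _ ((algebraMap S B).comp σ.toRingHom).toAlgebra := by
  letI i1 : Algebra R S := σ.toRingHom.toAlgebra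
  letI i2 : Algebra R B := ((algebraMap S B).comp σ.toRingHom).toAlgebra
  haveI : IsScalarTower R S B := IsScalarTower.of_algebraMap_eq (fun x => rfl)
  haveI : Algebra.FinitePresentation R S := by
    refine Algebra.FinitePresentation.of_surjective (f := (⟨σ.toRingHom, fun r => rfl⟩ : R →ₐ[R] S))
      σ.surjective ?_
    have : RingHom.ker (⟨σ.toRingHom, fun r => rfl⟩ : R →ₐ[R] S).toRingHom = ⊥ := by
      ext x
      simp only [RingHom.mem_ker, Ideal.mem_bot]
      exact ⟨fun h => σ.injective (by simpa using h), fun h => by simp [h]⟩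
    rw [this]
    exact Submodule.fg_bot
  exact Algebra.FinitePresentation.trans R S B

end Twist



theorem aux_injective_of_surjective_nilker
    {R B Q : Type u} [CommRing R] [CommRing B] [CommRing Q]
    [Algebra R B] [Algebra R Q]
    [Algebra.FormallyUnramified R B]
    [Algebra.FormallyEtale R Q] [Algebra.FinitePresentation R B]
    [Algebra.FinitePresentation R Q]
    (π : B →ₐ[R] Q) (hπ : Function.Surjective π)
    (hker : ∀ x ∈ RingHom.ker π.toRingHom, IsNilpotent x) :
    Function.Injective π := by
  set N := RingHom.ker π.toRingHom with hN
  have hfg : N.FG := Algebra.FinitePresentation.ker_fG_of_surjective π hπ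
  have hle : N ≤ Ideal.radical (⊥ : Ideal B) := by
    intro x hx
    obtain ⟨n, hn⟩ := hker x hx
    exact Ideal.mem_radical_iff.mpr ⟨n, by simp [hn]⟩
  have hnil : IsNilpotent N := by
    obtain ⟨n, hn⟩ := Ideal.exists_pow_le_of_le_radical_of_fg hle hfg
    exact ⟨n, le_bot_iff.mp hn⟩
  let e : (B ⧸ N) ≃ₐ[R] Q := Ideal.quotientKerAlgEquivOfSurjective hπ
  have he : ∀ x : B, e (Ideal.Quotient.mk N x) = π x := fun x => rfl
  let s : Q →ₐ[R] B := Algebra.FormallySmooth.lift N hnil e.symm.toAlgHom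
  have hs : ∀ q, Ideal.Quotient.mk N (s q) = e.symm q := fun q =>
    Algebra.FormallySmooth.mk_lift _ hnil _ q
  have key : s.comp π = AlgHom.id R B := by
    apply Algebra.FormallyUnramified.ext N hnil
    intro x
    rw [AlgHom.comp_apply, hs, AlgHom.id_apply]
    apply e.injective
    rw [AlgEquiv.apply_symm_apply, he]
  intro x y hxy
  have h1 := AlgHom.congr_fun key x
  have h2 := AlgHom.congr_fun key y
  simp only [AlgHom.comp_apply, AlgHom.id_apply] at h1 h2
  rw [← h1, ← h2, hxy]

theorem aux_inj_main {A B : Type u} [CommRing A] [CommRing B]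
    (algStd i2 : Algebra A B)
    (hEt : @Algebra.FormallyEtale A B _ _ i2)
    (hFP : @Algebra.FinitePresentation A B _ _ i2)
    (hUn : @Algebra.FormallyUnramified A B _ _ algStd)
    (hFPs : @Algebra.FinitePresentation A B _ _ algStd)
    (f : B →+* B)
    (hcomm : ∀ a, f (@algebraMap A B _ _ algStd a) = @algebraMap A B _ _ i2 a)
    (hsurj : Function.Surjective f)
    (hker : ∀ x, f x = 0 → IsNilpotent x) :
    Function.Injective f := by
  let π : @AlgHom A B B _ _ _ algStd i2 := @AlgHom.mk A B B _ _ _ algStd i2 f hcomm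
  exact @aux_injective_of_surjective_nilker A B B _ _ _ algStd i2 hUn hEt hFPs hFP π hsurj
    (fun x hx => hker x hx)

theorem aux_frob_injective (p : ℕ) [Fact p.Prime]
    (A B : Type u) [CommRing A] [CommRing B] [CharP A p] [CharP B p]
    [PerfectRing A p] [Algebra A B] [Algebra.Etale A B]
    (hsurj : Function.Surjective (frobenius B p)) :
    Function.Injective (frobenius B p) := by
  refine aux_inj_main ‹Algebra A B›
    ((algebraMap A B).comp ((frobeniusEquiv A p : A ≃+* A)).toRingHom).toAlgebra
    (aux_formallyEtale_twist (frobeniusEquiv A p : A ≃+* A))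
    (aux_finitePresentation_twist (frobeniusEquiv A p : A ≃+* A))
    inferInstance inferInstance (frobenius B p)
    (fun a => ((algebraMap A B).map_frobenius p a).symm) hsurj
    (fun x hx => ⟨p, by simpa [frobenius_def] using hx⟩)

theorem aux_fiber_surj {κ F : Type u} [Field κ] [CommRing F] [Algebra κ F]
    [Algebra.FormallyUnramified κ F] [Module.Finite κ F]
    (p : ℕ) [Fact p.Prime] [CharP κ p]
    (hp : ∀ x : F, ∃ c : κ, x ^ p = algebraMap κ F c) :
    Function.Surjective (algebraMap κ F) := by
  rcases subsingleton_or_nontrivial F with hF | hF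
  · exact fun x => ⟨0, Subsingleton.elim _ _⟩
  haveI : Algebra.EssFiniteType κ F := Algebra.EssFiniteType.of_finiteType κ F
  haveI hred : IsReduced F := Algebra.FormallyUnramified.isReduced_of_field κ F
  haveI : IsArtinianRing F := isArtinian_of_tower κ inferInstance
  have hinj : Function.Injective (algebraMap κ F) := (algebraMap κ F).injective
  -- idempotents are 0 or 1
  have hidem : ∀ e : F, e * e = e → e = 0 ∨ e = 1 := by
    intro e he
    have hpow : ∀ n : ℕ, e ^ (n + 1) = e := by
      intro n
      induction n with
      | zero => simp
      | succ k ih => rw [pow_succ, ih, he]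
    obtain ⟨c, hc⟩ := hp e
    have hep : e ^ p = e := by
      obtain ⟨m, hm⟩ := Nat.exists_eq_succ_of_ne_zero (Fact.out : p.Prime).ne_zero
      rw [hm]; exact hpow m
    have hce : algebraMap κ F c = e := by rw [← hc, hep]
    have h1 : algebraMap κ F (c * c) = algebraMap κ F c := by
      rw [map_mul, hce]; rw [he]
    have hcc : c * (c - 1) = 0 := by
      have := hinj h1; ring_nf; linear_combination this
    rcases mul_eq_zero.mp hcc with h | h
    · left; rw [← hce, h, map_zero]
    · right; rw [← hce, sub_eq_zero.mp h, map_one]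
  -- F is a field
  have hfield : IsField F := by
    refine ⟨exists_pair_ne F, mul_comm, ?_⟩
    intro a ha
    have hmono : ∀ n m : ℕ, n ≤ m → Ideal.span {a ^ (m + 1)} ≤ Ideal.span {a ^ (n + 1)} := by
      intro n m hnm
      rw [Ideal.span_le, Set.singleton_subset_iff]
      have : a ^ (m + 1) = a ^ (m - n) * a ^ (n + 1) := by
        rw [← pow_add]; congr 1; omega
      rw [this]
      exact Ideal.mul_mem_left _ _ (Ideal.subset_span rfl)
    obtain ⟨n, hn⟩ := IsArtinian.monotone_stabilizes (R := F) (M := F)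
      ⟨fun n => OrderDual.toDual (Ideal.span {a ^ (n + 1)}), fun n m hnm => hmono n m hnm⟩
    have hstab : Ideal.span {a ^ (n + 1)} = Ideal.span {a ^ (n + 1 + 1)} :=
      OrderDual.toDual_inj.mp (hn (n + 1) (Nat.le_succ n))
    obtain ⟨y, hy⟩ := Ideal.mem_span_singleton'.mp
      (hstab ▸ Ideal.subset_span (Set.mem_singleton (a ^ (n + 1))))
    -- hy : y * a ^ (n + 1 + 1) = a ^ (n + 1)
    have hk : ∀ k : ℕ, a ^ (n + 1) = y ^ k * a ^ (n + 1 + k) := by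
      intro k
      induction k with
      | zero => simp
      | succ k ih =>
        calc a ^ (n + 1) = y ^ k * a ^ (n + 1 + k) := ih
          _ = y ^ k * (a ^ (n + 1) * a ^ k) := by ring_nf
          _ = y ^ k * ((y * a ^ (n + 1 + 1)) * a ^ k) := by rw [hy]
          _ = y ^ (k + 1) * a ^ (n + 1 + (k + 1)) := by ring
    set e := y ^ (n + 1) * a ^ (n + 1) with hedef
    have h2 : y ^ (n + 1) * a ^ (n + 1 + (n + 1)) = a ^ (n + 1) := (hk (n + 1)).symm
    have hee : e * e = e := by
      calc e * e = y ^ (n + 1) * (y ^ (n + 1) * a ^ (n + 1 + (n + 1))) := by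
            rw [hedef]; ring
        _ = y ^ (n + 1) * a ^ (n + 1) := by rw [h2]
        _ = e := rfl
    rcases hidem e hee with h | h
    · exfalso
      apply ha
      have hz : a ^ (n + 1) = 0 := by
        calc a ^ (n + 1) = y ^ (n + 1) * a ^ (n + 1 + (n + 1)) := hk (n + 1)
          _ = (y ^ (n + 1) * a ^ (n + 1)) * a ^ (n + 1) := by ring
          _ = e * a ^ (n + 1) := by rw [hedef]
          _ = 0 := by rw [h, zero_mul]
      exact IsNilpotent.eq_zero ⟨n + 1, hz⟩
    · refine ⟨y ^ (n + 1) * a ^ n, ?_⟩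
      calc a * (y ^ (n + 1) * a ^ n) = y ^ (n + 1) * a ^ (n + 1) := by ring
        _ = 1 := by rw [← hedef, h]
  letI fF : Field F := hfield.toField
  haveI : IsPurelyInseparable κ F := by
    rw [isPurelyInseparable_iff_pow_mem κ p]
    intro x
    obtain ⟨c, hc⟩ := hp x
    exact ⟨1, by rw [pow_one, hc]; exact ⟨c, rfl⟩⟩
  have htop := Algebra.FormallyUnramified.range_eq_top_of_isPurelyInseparable κ F
  intro x
  have hx : x ∈ (algebraMap κ F).range := by rw [htop]; trivial
  exact hx

theorem aux_nakayama {R M : Type u} [CommRing R] [AddCommGroup M] [Module R M]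
    [Module.Finite R M]
    (h : ∀ m : Ideal R, m.IsMaximal → m • (⊤ : Submodule R M) = ⊤) :
    Subsingleton M := by
  have key : (⊥ : Submodule R M) = ⊤ → Subsingleton M := by
    intro htop
    refine ⟨fun a b => ?_⟩
    have ha : a ∈ (⊥ : Submodule R M) := htop.symm ▸ Submodule.mem_top
    have hb : b ∈ (⊥ : Submodule R M) := htop.symm ▸ Submodule.mem_top
    rw [Submodule.mem_bot] at ha hb
    rw [ha, hb]
  haveI : IsCoatomic (Submodule R M) :=
    CompleteLattice.coatomic_of_top_compact
      ((Submodule.fg_iff_compact ⊤).mp Module.Finite.fg_top)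
  rcases eq_top_or_exists_le_coatom (⊥ : Submodule R M) with htop | ⟨N, hN, _⟩
  · exact key htop
  · exfalso
    haveI hsimple : IsSimpleModule R (M ⧸ N) := isSimpleModule_iff_isCoatom.mpr hN
    have hmax : (Module.annihilator R (M ⧸ N)).IsMaximal :=
      IsSimpleModule.annihilator_isMaximal
    have h1 := h _ hmax
    have h2 : (Module.annihilator R (M ⧸ N)) • (⊤ : Submodule R (M ⧸ N)) = ⊤ := by
      have h3 := congrArg (Submodule.map (N.mkQ)) h1
      rwa [Submodule.map_smul'', Submodule.map_top, Submodule.range_mkQ] at h3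
    have h4 : (Module.annihilator R (M ⧸ N)) • (⊤ : Submodule R (M ⧸ N)) = ⊥ := by
      rw [eq_bot_iff]
      refine Submodule.smul_le.mpr fun r hr x _ => ?_
      rw [Submodule.mem_bot]
      exact Module.mem_annihilator.mp hr x
    rw [h2] at h4
    exact bot_ne_top h4.symm

set_option maxHeartbeats 1000000 in
set_option synthInstance.maxHeartbeats 400000 in
theorem aux_frob_surjective (p : ℕ) [Fact p.Prime]
    (A B : Type u) [CommRing A] [CommRing B] [CharP A p] [CharP B p]
    [PerfectRing A p] [Algebra A B] [Algebra.Etale A B] :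
    Function.Surjective (frobenius B p) := by
  classical
  obtain ⟨C, hCdef⟩ : ∃ C : Subring B, C = (frobenius B p).range := ⟨_, rfl⟩
  have hCmem : ∀ b : B, b ∈ C ↔ ∃ x, frobenius B p x = b := by
    intro b; rw [hCdef]; exact Iff.rfl
  have hC : ∀ b : B, b ^ p ∈ C := fun b => (hCmem _).mpr ⟨b, rfl⟩
  have hA : ∀ a : A, algebraMap A B a ∈ C := by
    intro a
    refine (hCmem _).mpr ⟨algebraMap A B ((frobeniusEquiv A p).symm a), ?_⟩
    rw [← RingHom.map_frobenius]
    congr 1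
    exact (frobeniusEquiv A p).apply_symm_apply a
  letI instAC : Algebra A C := ((algebraMap A B).codRestrict C hA).toAlgebra
  haveI instTower : IsScalarTower A C B := IsScalarTower.of_algebraMap_eq (fun a => rfl)
  haveI hUnrAB : Algebra.FormallyUnramified A B := inferInstance
  haveI hUnr : Algebra.FormallyUnramified C B := Algebra.FormallyUnramified.of_restrictScalars A C B
  have hFT : Algebra.FiniteType A B := inferInstance
  obtain ⟨s, hs⟩ := hFT.1
  have hadj : Algebra.adjoin C (↑s : Set B) = ⊤ := by
    rw [_root_.eq_top_iff]
    intro b _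
    have hb : b ∈ Algebra.adjoin A (↑s : Set B) := by rw [hs]; trivial
    exact Algebra.adjoin_induction
      (fun x hx => Algebra.subset_adjoin hx)
      (fun a => by
        have : algebraMap A B a = algebraMap C B ⟨algebraMap A B a, hA a⟩ := rfl
        rw [this]
        exact Subalgebra.algebraMap_mem _ _)
      (fun x y _ _ hx hy => add_mem hx hy)
      (fun x y _ _ hx hy => mul_mem hx hy)
      hb
  haveI hFTC : Algebra.FiniteType C B := ⟨⟨s, hadj⟩⟩
  haveI : Algebra.IsIntegral C B := by
    constructor
    intro b
    refine ⟨Polynomial.X ^ p - Polynomial.C (⟨b ^ p, hC b⟩ : C),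
      Polynomial.monic_X_pow_sub_C _ (Fact.out : p.Prime).ne_zero, ?_⟩
    simp only [Polynomial.eval₂_sub, Polynomial.eval₂_X_pow, Polynomial.eval₂_C]
    exact sub_eq_zero.mpr rfl
  haveI hMF : Module.Finite C B := Algebra.IsIntegral.finite
  set N : Submodule C B := LinearMap.range (Algebra.linearMap C B) with hNdef
  suffices hss : Subsingleton (B ⧸ N) by
    intro b
    have h0 : Submodule.Quotient.mk (p := N) b = Submodule.Quotient.mk (p := N) 0 :=
      Subsingleton.elim _ _
    have hbN : b ∈ N := by
      have := (Submodule.Quotient.eq N).mp h0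
      simpa using this
    obtain ⟨c, hc⟩ := hbN
    obtain ⟨x, hx⟩ := (hCmem _).mp c.2
    exact ⟨x, by rw [hx]; exact hc⟩
  apply aux_nakayama (R := C)
  intro m hm
  haveI := hm
  letI : Field (C ⧸ m) := Ideal.Quotient.field m
  set I : Ideal B := Ideal.map (algebraMap C B) m with hIdef
  letI instKF : Algebra (C ⧸ m) (B ⧸ I) :=
    Ideal.Quotient.algebraQuotientOfLEComap Ideal.le_comap_map
  haveI : IsScalarTower C (C ⧸ m) (B ⧸ I) :=
    IsScalarTower.of_algebraMap_eq (fun c => rfl)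
  haveI : Algebra.FormallyUnramified C (B ⧸ I) := inferInstance
  haveI : Algebra.FormallyUnramified (C ⧸ m) (B ⧸ I) :=
    Algebra.FormallyUnramified.of_restrictScalars C (C ⧸ m) (B ⧸ I)
  haveI : Module.Finite C (B ⧸ I) :=
    Module.Finite.of_surjective (Ideal.Quotient.mkₐ C I).toLinearMap
      Ideal.Quotient.mk_surjective
  haveI : Module.Finite (C ⧸ m) (B ⧸ I) :=
    Module.Finite.of_restrictScalars_finite C _ _
  haveI : CharP (C ⧸ m) p := by
    haveI : CharP C p := CharP.subring B p C
    rw [CharP.charP_iff_prime_eq_zero (Fact.out : p.Prime)]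
    have h1 : ((p : C) : C ⧸ m) = 0 := by
      rw [CharP.cast_eq_zero C p]
      simp
    rw [← h1]
    rfl
  have hp : ∀ x : B ⧸ I, ∃ c : C ⧸ m, x ^ p = algebraMap (C ⧸ m) (B ⧸ I) c := by
    intro x
    obtain ⟨b, rfl⟩ := Ideal.Quotient.mk_surjective x
    refine ⟨Ideal.Quotient.mk m (⟨b ^ p, hC b⟩ : C), ?_⟩
    have h2 : algebraMap (C ⧸ m) (B ⧸ I) (Ideal.Quotient.mk m (⟨b ^ p, hC b⟩ : C)) =
        Ideal.Quotient.mk I (algebraMap C B (⟨b ^ p, hC b⟩ : C)) := by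
      rfl
    rw [h2, ← map_pow]
    rfl
  have hsurjF := aux_fiber_surj p hp
  -- m • ⊤ = ⊤ in B ⧸ N
  have hsm : ∀ (b y : B), y ∈ (m • (⊤ : Submodule C B)) → b * y ∈ m • (⊤ : Submodule C B) := by
    intro b y hy
    refine Submodule.smul_induction_on hy ?_ ?_
    · intro r hr n _
      have h3 : b * (r • n) = r • (b * n) := by
        rw [Algebra.smul_def, Algebra.smul_def]; ring
      rw [h3]
      exact Submodule.smul_mem_smul hr trivial
    · intro u v hu hv
      rw [mul_add]
      exact add_mem hu hv
  have hImem : ∀ y ∈ I, y ∈ (m • (⊤ : Submodule C B)) := by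
    intro y hy
    refine Submodule.span_induction ?_ ?_ ?_ ?_ hy
    · rintro _ ⟨c, hc, rfl⟩
      have h4 : algebraMap C B c = c • (1 : B) := by
        rw [Algebra.smul_def, mul_one]
      rw [h4]
      exact Submodule.smul_mem_smul hc trivial
    · exact Submodule.zero_mem _
    · intro u v _ _ hu hv
      exact Submodule.add_mem _ hu hv
    · intro bb x _ hx
      exact hsm bb x hx
  rw [_root_.eq_top_iff]
  rintro x -
  obtain ⟨b, rfl⟩ := Submodule.Quotient.mk_surjective N x
  obtain ⟨cbar, hcbar⟩ := hsurjF (Ideal.Quotient.mk I b)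
  obtain ⟨c0, rfl⟩ := Ideal.Quotient.mk_surjective cbar
  have hbI : b - algebraMap C B c0 ∈ I := by
    have h5 : Ideal.Quotient.mk I (algebraMap C B c0) = Ideal.Quotient.mk I b := by
      have h5' : algebraMap (↥C ⧸ m) (B ⧸ I) (Ideal.Quotient.mk m c0) =
          Ideal.Quotient.mk I (algebraMap (↥C) B c0) := rfl
      rw [← h5']
      exact hcbar
    rw [← Ideal.Quotient.mk_eq_mk_iff_sub_mem]
    exact h5.symm
  have h6 : Submodule.Quotient.mk (p := N) b =
      Submodule.Quotient.mk (p := N) (b - algebraMap C B c0) := by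
    rw [Submodule.Quotient.eq]
    simpa using ⟨c0, rfl⟩
  rw [h6]
  have h7 := Submodule.map_smul'' m (⊤ : Submodule C B) N.mkQ
  have h8 : Submodule.map N.mkQ (⊤ : Submodule C B) = ⊤ := by
    rw [Submodule.map_top, Submodule.range_mkQ]
  rw [h8] at h7
  rw [← h7]
  exact Submodule.mem_map_of_mem (hImem _ hbI)

/-- If `A` is a perfect commutative ring of prime characteristic `p` and `B`
is an étale `A`-algebra (formally étale and of finite presentation), then `B` is perfect:
the Frobenius endomorphism `x ↦ x ^ p` of `B` is bijective. -/
theorem perfectRing_of_etale (p : ℕ) [Fact p.Prime]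
    (A B : Type u) [CommRing A] [CommRing B] [CharP A p] [CharP B p]
    [PerfectRing A p] [Algebra A B] [Algebra.Etale A B] :
    PerfectRing B p := by
  have hs := aux_frob_surjective p A B
  have hi := aux_frob_injective p A B hs
  exact ⟨⟨hi, hs⟩⟩
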